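/- arXiv:1406.4768 — 3 statements merged into one kernel-verified Lean document; each statement's English description precedes it below -/
import Mathlib

section
/- Let h > 0, and for n ≥ 1 set μ_n = (2n-1)π/(2h). Let k > 0 with k ≠ μ_n for all n, and let M be such that μ_M < k < μ_{M+1} (assume M ≥ 1). Define ξ_n = √(k² - μ_n²) for n ≤ M. Then Σ_{n=1}^{M} 1/(h ξ_n) ≤ 1/(h ξ_M) + 1/2. -/
theorem propagating_mode_sum_bound
    (h k : ℝ) (hh : 0 < h) (hk : 0 < k) (M : ℕ) (hM : 1 ≤ M)
    (μ : ℕ → ℝ) (hμ : ∀ n : ℕ, μ n = (2 * n - 1) * Real.pi / (2 * h))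
    (hknot : ∀ n : ℕ, 1 ≤ n → k ≠ μ n)
    (hkM : μ M < k) (hkM1 : k < μ (M + 1))
    (ξ : ℕ → ℝ) (hξ : ∀ n : ℕ, ξ n = Real.sqrt (k ^ 2 - μ n ^ 2)) :
    ∑ n ∈ Finset.Icc 1 M, 1 / (h * ξ n) ≤ 1 / (h * ξ M) + 1 / 2 := by
  have hπ := Real.pi_pos
  have hμmono : ∀ m n : ℕ, m ≤ n → μ m ≤ μ n := by
    intro m n hmn
    rw [hμ, hμ, div_le_div_iff₀ (by linarith) (by linarith)]
    have h1 : (m : ℝ) ≤ n := Nat.cast_le.2 hmn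
    have h2 := mul_le_mul_of_nonneg_right
      (mul_le_mul_of_nonneg_right (by linarith : (2*(m:ℝ)-1) ≤ 2*(n:ℝ)-1) hπ.le)
      (by linarith : (0:ℝ) ≤ 2*h)
    linarith
  have hμpos : ∀ n : ℕ, 1 ≤ n → 0 < μ n := by
    intro n hn
    have h1 : μ 1 ≤ μ n := hμmono 1 n hn
    have h2 : μ 1 = Real.pi / (2 * h) := by rw [hμ]; push_cast; ring_nf
    have h3 : 0 < μ 1 := by rw [h2]; positivity
    linarith
  have hμlt : ∀ n : ℕ, n ≤ M → μ n < k := fun n hn => lt_of_le_of_lt (hμmono n M hn) hkM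
  have hξpos : ∀ n : ℕ, 1 ≤ n → n ≤ M → 0 < ξ n := by
    intro n h1 h2
    rw [hξ]
    apply Real.sqrt_pos.2
    have := hμpos n h1
    have := hμlt n h2
    nlinarith
  have key : ∀ n : ℕ, 1 ≤ n → n < M →
      1 / (h * ξ n) ≤ (Real.arcsin (μ (n + 1) / k) - Real.arcsin (μ n / k)) / Real.pi := by
    intro n h1 h2
    set a := μ n / k with ha
    set b := μ (n + 1) / k with hb
    have hμn := hμpos n h1
    have hμnk := hμlt n (le_of_lt h2)
    have hμn1k := hμlt (n + 1) h2
    have hμstep : μ (n + 1) - μ n = Real.pi / h := by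
      rw [hμ, hμ]; push_cast; field_simp; ring
    have hμn1 : μ n < μ (n + 1) := by
      have : 0 < Real.pi / h := by positivity
      linarith
    have ha0 : 0 < a := div_pos hμn hk
    have hab : a < b := by rw [ha, hb, div_lt_div_iff₀ hk hk]; nlinarith
    have hb1 : b < 1 := (div_lt_one hk).2 hμn1k
    have hξn := hξpos n h1 (le_of_lt h2)
    have hcont : ContinuousOn Real.arcsin (Set.Icc a b) := Real.continuous_arcsin.continuousOn
    have hdiff : DifferentiableOn ℝ Real.arcsin (interior (Set.Icc a b)) := by
      rw [interior_Icc]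
      intro x hx
      exact (Real.differentiableAt_arcsin.2
        ⟨ne_of_gt (by nlinarith [hx.1, hx.2]), ne_of_lt (by nlinarith [hx.1, hx.2])⟩).differentiableWithinAt
    have hder : ∀ x ∈ interior (Set.Icc a b), 1 / Real.sqrt (1 - a ^ 2) ≤ deriv Real.arcsin x := by
      rw [interior_Icc]
      intro x hx
      rw [Real.deriv_arcsin]
      have hx2 : 0 < 1 - x ^ 2 := by nlinarith [hx.1, hx.2]
      have hle : Real.sqrt (1 - x ^ 2) ≤ Real.sqrt (1 - a ^ 2) :=
        Real.sqrt_le_sqrt (by nlinarith [hx.1])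
      exact one_div_le_one_div_of_le (Real.sqrt_pos.2 hx2) hle
    have hmvt := (convex_Icc a b).mul_sub_le_image_sub_of_le_deriv hcont hdiff hder a
      (Set.left_mem_Icc.2 hab.le) b (Set.right_mem_Icc.2 hab.le) hab.le
    have hsq : Real.sqrt (1 - a ^ 2) = ξ n / k := by
      rw [hξ]
      have he : 1 - a ^ 2 = (k ^ 2 - μ n ^ 2) / k ^ 2 := by
        rw [ha]; field_simp
      rw [he, Real.sqrt_div (by nlinarith) (k ^ 2), Real.sqrt_sq hk.le]
    have hba : b - a = Real.pi / (h * k) := by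
      rw [hb, ha, div_sub_div_same, hμstep, div_div]
    rw [hsq, hba] at hmvt
    rw [le_div_iff₀ hπ]
    have heq : 1 / (h * ξ n) * Real.pi = 1 / (ξ n / k) * (Real.pi / (h * k)) := by
      field_simp
    rw [heq]
    exact hmvt
  have tel : ∀ m : ℕ, ∑ n ∈ Finset.Icc 1 m,
      (Real.arcsin (μ (n + 1) / k) - Real.arcsin (μ n / k)) =
      Real.arcsin (μ (m + 1) / k) - Real.arcsin (μ 1 / k) := by
    intro m
    induction m with
    | zero => simp
    | succ p ih =>
      rw [Finset.sum_Icc_succ_top (by omega), ih]; ring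
  obtain ⟨m, rfl⟩ : ∃ m, M = m + 1 := ⟨M - 1, by omega⟩
  rw [Finset.sum_Icc_succ_top (by omega)]
  have hsum : ∑ n ∈ Finset.Icc 1 m, 1 / (h * ξ n) ≤ 1 / 2 := by
    calc ∑ n ∈ Finset.Icc 1 m, 1 / (h * ξ n)
        ≤ ∑ n ∈ Finset.Icc 1 m,
            (Real.arcsin (μ (n + 1) / k) - Real.arcsin (μ n / k)) / Real.pi := by
          apply Finset.sum_le_sum
          intro n hn
          rw [Finset.mem_Icc] at hn
          exact key n hn.1 (by omega)
      _ = (Real.arcsin (μ (m + 1) / k) - Real.arcsin (μ 1 / k)) / Real.pi := by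
          rw [← Finset.sum_div, tel m]
      _ ≤ (Real.pi / 2 - 0) / Real.pi := by
          gcongr
          · exact Real.arcsin_le_pi_div_two _
          · exact Real.arcsin_nonneg.2 (div_nonneg (hμpos 1 le_rfl).le hk.le)
      _ = 1 / 2 := by field_simp; ring
  linarith
end

section
/- Let h > 0, μ_n = (2n-1)π/(2h), k > 0 with μ_M < k < μ_{M+1}, and |ξ_n| = √(μ_n² - k²) for n ≥ M+1. If r ≥ α h for some α > 0, then Σ_{n=M+1}^{∞} (1/(h|ξ_n|)) e^{-|ξ_n| r} ≤ 1/(h|ξ_{M+1}|) + 1/(α k h π). -/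
set_option maxHeartbeats 1000000 in
theorem evanescent_tail_bound
    (h k r α : ℝ) (hh : 0 < h) (hk : 0 < k) (hα : 0 < α) (hr : r ≥ α * h)
    (M : ℕ)
    (μ : ℕ → ℝ) (hμ : ∀ n : ℕ, μ n = (2 * n - 1) * Real.pi / (2 * h))
    (hkM : μ M < k) (hkM1 : k < μ (M + 1))
    (ξabs : ℕ → ℝ) (hξ : ∀ n : ℕ, M + 1 ≤ n → ξabs n = Real.sqrt (μ n ^ 2 - k ^ 2)) :
    ∑' m : ℕ, (1 / (h * ξabs (M + 1 + m))) * Real.exp (-(ξabs (M + 1 + m)) * r)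
      ≤ 1 / (h * ξabs (M + 1)) + 1 / (α * k * h * Real.pi) := by
  have hπ := Real.pi_pos
  have hr0 : 0 < r := lt_of_lt_of_le (mul_pos hα hh) hr
  set c : ℝ := 2 * k * Real.pi / h with hc
  have hc0 : 0 < c := by positivity
  set f : ℕ → ℝ := fun m =>
    (1 / (h * ξabs (M + 1 + m))) * Real.exp (-(ξabs (M + 1 + m)) * r) with hf
  -- μ formula
  have hμm : ∀ m : ℕ, μ (M + 1 + m) = μ (M + 1) + m * Real.pi / h := by
    intro m
    rw [hμ, hμ]
    push_cast
    field_simp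
    ring
  have hμlb : ∀ m : ℕ, k + m * Real.pi / h ≤ μ (M + 1 + m) := by
    intro m
    rw [hμm]
    have : k ≤ μ (M + 1) := le_of_lt hkM1
    linarith
  -- ξ positivity
  have hξpos : ∀ m : ℕ, 0 < ξabs (M + 1 + m) := by
    intro m
    rw [hξ _ (by omega)]
    apply Real.sqrt_pos.2
    have h2 : 0 ≤ (m : ℝ) * Real.pi / h := by positivity
    have h3 : μ (M + 1) ≤ μ (M + 1 + m) := by rw [hμm]; linarith
    nlinarith [hkM1, hk]
  -- ξ lower bound via c
  have hξlb : ∀ m : ℕ, Real.sqrt (c * m) ≤ ξabs (M + 1 + m) := by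
    intro m
    rw [hξ _ (by omega)]
    apply Real.sqrt_le_sqrt
    have h1 : k + (m : ℝ) * Real.pi / h ≤ μ (M + 1 + m) := hμlb m
    have h2 : 0 ≤ (m : ℝ) * Real.pi / h := by positivity
    have hc' : c * m = ((m : ℝ) * Real.pi / h) * (2 * k) := by
      rw [hc]; field_simp
    nlinarith
  have hfnn : ∀ m : ℕ, 0 ≤ f m := by
    intro m
    have := hξpos m
    have := Real.exp_pos (-(ξabs (M + 1 + m)) * r)
    positivity
  set w : ℕ → ℝ := fun m => Real.exp (-Real.sqrt (c * m) * r) with hw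
  set D : ℝ := 1 / (k * Real.pi * r) with hD
  have hD0 : 0 < D := by positivity
  -- bound for terms m ≥ 1
  have hkey : ∀ m : ℕ, f (m + 1) ≤ D * (w m - w (m + 1)) := by
    intro m
    set a : ℝ := Real.sqrt (c * m) with ha
    set b : ℝ := Real.sqrt (c * (m + 1 : ℕ)) with hb
    have ha0 : 0 ≤ a := Real.sqrt_nonneg _
    have hb0 : 0 < b := Real.sqrt_pos.2 (by push_cast; positivity)
    have hab : a ≤ b := by
      apply Real.sqrt_le_sqrt
      push_cast
      nlinarith
    have ha2 : a ^ 2 = c * m := Real.sq_sqrt (by positivity)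
    have hb2 : b ^ 2 = c * (m + 1 : ℕ) := Real.sq_sqrt (by push_cast; positivity)
    have hdiff : b ^ 2 - a ^ 2 = c := by rw [ha2, hb2]; push_cast; ring
    -- b - a ≥ c / (2b), i.e. 2b(b-a) ≥ c
    have hgap : c ≤ 2 * b * (b - a) := by nlinarith
    have hξb : b ≤ ξabs (M + 1 + (m + 1)) := hξlb (m + 1)
    set ξ : ℝ := ξabs (M + 1 + (m + 1)) with hξξ
    have hξ0 : 0 < ξ := hξpos (m + 1)
    have Ea : w m = Real.exp (-a * r) := rfl
    have Eb : w (m + 1) = Real.exp (-b * r) := rfl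
    have hEb0 : 0 < Real.exp (-b * r) := Real.exp_pos _
    -- step 1 : f (m+1) ≤ exp(-b r)/(h b)
    have step1 : f (m + 1) ≤ 1 / (h * b) * Real.exp (-b * r) := by
      have h1 : 1 / (h * ξ) ≤ 1 / (h * b) := by
        apply one_div_le_one_div_of_le (by positivity)
        exact mul_le_mul_of_nonneg_left hξb (le_of_lt hh)
      have h2 : Real.exp (-ξ * r) ≤ Real.exp (-b * r) := by
        apply Real.exp_le_exp.2
        nlinarith
      have h3 : 0 ≤ Real.exp (-ξ * r) := (Real.exp_pos _).le
      have h4 : 0 ≤ 1 / (h * b) := by positivity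
      calc f (m + 1) = (1 / (h * ξ)) * Real.exp (-ξ * r) := rfl
        _ ≤ (1 / (h * b)) * Real.exp (-b * r) := by
            apply mul_le_mul h1 h2 h3 h4
    -- step 2 : exp(-b r)/(h b) ≤ D * (exp(-a r) - exp(-b r))
    have hconv : r * (b - a) * Real.exp (-b * r) ≤ Real.exp (-a * r) - Real.exp (-b * r) := by
      have h1 : r * (b - a) + 1 ≤ Real.exp (r * (b - a)) := Real.add_one_le_exp _
      have h2 : Real.exp (-b * r) * Real.exp (r * (b - a)) = Real.exp (-a * r) := by
        rw [← Real.exp_add]; ring_nf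
      nlinarith [mul_le_mul_of_nonneg_left h1 hEb0.le]
    have hEdiff : r * (c / (2 * b)) * Real.exp (-b * r) ≤
        Real.exp (-a * r) - Real.exp (-b * r) := by
      have h1 : c / (2 * b) ≤ b - a := by
        rw [div_le_iff₀ (by positivity)]
        have : (b - a) * (2 * b) = 2 * b * (b - a) := by ring
        linarith
      have h2 : r * (c / (2 * b)) * Real.exp (-b * r) ≤ r * (b - a) * Real.exp (-b * r) := by
        apply mul_le_mul_of_nonneg_right _ hEb0.le
        exact mul_le_mul_of_nonneg_left h1 hr0.le
      linarith
    have step2 : 1 / (h * b) * Real.exp (-b * r) ≤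
        D * (Real.exp (-a * r) - Real.exp (-b * r)) := by
      have heq : D * (r * (c / (2 * b)) * Real.exp (-b * r)) =
          1 / (h * b) * Real.exp (-b * r) := by
        rw [hD, hc]
        field_simp
      calc 1 / (h * b) * Real.exp (-b * r)
          = D * (r * (c / (2 * b)) * Real.exp (-b * r)) := heq.symm
        _ ≤ D * (Real.exp (-a * r) - Real.exp (-b * r)) :=
            mul_le_mul_of_nonneg_left hEdiff hD0.le
    rw [Ea, Eb]
    exact le_trans step1 step2
  -- first term bound
  have hf0 : f 0 ≤ 1 / (h * ξabs (M + 1)) := by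
    have hξ0 : 0 < ξabs (M + 1 + 0) := hξpos 0
    have h1 : Real.exp (-(ξabs (M + 1 + 0)) * r) ≤ 1 := by
      apply Real.exp_le_one_iff.2
      nlinarith
    calc f 0 = (1 / (h * ξabs (M + 1 + 0))) * Real.exp (-(ξabs (M + 1 + 0)) * r) := rfl
      _ ≤ (1 / (h * ξabs (M + 1 + 0))) * 1 := by
          apply mul_le_mul_of_nonneg_left h1 (by positivity)
      _ = 1 / (h * ξabs (M + 1)) := by norm_num
  have hDle : D ≤ 1 / (α * k * h * Real.pi) := by
    rw [hD]
    apply one_div_le_one_div_of_le (by positivity)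
    calc α * k * h * Real.pi = k * Real.pi * (α * h) := by ring
      _ ≤ k * Real.pi * r := by
          apply mul_le_mul_of_nonneg_left hr (by positivity)
  -- partial sums
  have hpartial : ∀ N : ℕ, ∑ i ∈ Finset.range N, f i ≤
      1 / (h * ξabs (M + 1)) + 1 / (α * k * h * Real.pi) := by
    intro N
    have hξM1 : 0 < ξabs (M + 1) := by
      have := hξpos 0
      simpa using this
    match N with
    | 0 => simp; positivity
    | Nat.succ n =>
      rw [Finset.sum_range_succ']
      have h1 : ∑ i ∈ Finset.range n, f (i + 1) ≤ D * (w 0 - w n) := by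
        calc ∑ i ∈ Finset.range n, f (i + 1)
            ≤ ∑ i ∈ Finset.range n, D * (w i - w (i + 1)) :=
              Finset.sum_le_sum (fun i _ => hkey i)
          _ = D * ∑ i ∈ Finset.range n, (w i - w (i + 1)) := by
              rw [Finset.mul_sum]
          _ = D * (w 0 - w n) := by rw [Finset.sum_range_sub']
      have hw0 : w 0 = 1 := by
        simp [hw]
      have hwn : 0 ≤ w n := (Real.exp_pos _).le
      have h2 : D * (w 0 - w n) ≤ D := by
        rw [hw0]
        nlinarith
      have := hf0
      have := hDle
      linarith
  exact Summable.tsum_le_of_sum_range_le (summable_of_sum_range_le hfnn hpartial) hpartial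
end

section
/- Let ξ = ξ₁ − i k γ with ξ₁ ≥ kγ, γ ∈ (0, 1/√π], k > 0, and μ = √(k² − ξ²) with Re√ ≥ 0, μ = μ₁ + iμ₂. Then μ₂ ≥ ξ₁ γ / √(1 + γ²) ≥ ξ₁ γ / √2. -/
open Complex

theorem sip_horizontal_sqrt_im_lower_bound
    (k γ ξ₁ : ℝ) (hk : 0 < k) (hγ0 : 0 < γ) (hγ1 : γ ≤ 1 / Real.sqrt Real.pi)
    (hξ₁ : k * γ ≤ ξ₁)
    (ξ μ : ℂ) (hξ : ξ = (ξ₁ : ℂ) - I * k * γ)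
    (hμ : μ = ((k : ℂ) ^ 2 - ξ ^ 2) ^ ((1 : ℂ) / 2)) :
    μ.im ≥ ξ₁ * γ / Real.sqrt (1 + γ ^ 2) ∧
    ξ₁ * γ / Real.sqrt (1 + γ ^ 2) ≥ ξ₁ * γ / Real.sqrt 2 := by
  have hd : (0:ℝ) < 1 + γ ^ 2 := by positivity
  have hξ₁pos : 0 < ξ₁ := lt_of_lt_of_le (by positivity) hξ₁
  have hsd : (0:ℝ) < Real.sqrt (1 + γ ^ 2) := Real.sqrt_pos.mpr hd
  set w : ℂ := (k : ℂ) ^ 2 - ξ ^ 2 with hw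
  have hre : w.re = k ^ 2 + (k * γ) ^ 2 - ξ₁ ^ 2 := by
    simp [hw, hξ, Complex.ext_iff, pow_two]; ring
  have him : w.im = 2 * ξ₁ * (k * γ) := by
    simp [hw, hξ, Complex.ext_iff, pow_two]; ring
  have him0 : 0 ≤ w.im := by rw [him]; positivity
  set c : ℝ := ξ₁ * γ / Real.sqrt (1 + γ ^ 2) with hc
  have hc0 : 0 ≤ c := by positivity
  have hc2 : c ^ 2 = ξ₁ ^ 2 * γ ^ 2 / (1 + γ ^ 2) := by
    rw [hc, div_pow, Real.sq_sqrt hd.le]; ring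
  have habs : ‖w‖ = Real.sqrt (w.re ^ 2 + w.im ^ 2) := by
    rw [Complex.norm_def, Complex.normSq_apply]; ring_nf
  have hkey : w.re + 2 * c ^ 2 ≤ ‖w‖ := by
    rw [habs]
    have h0 : (w.re + 2 * c ^ 2) ^ 2 ≤ w.re ^ 2 + w.im ^ 2 := by
      rw [hre, him, hc2]
      rw [← sub_nonneg]
      have expand : (k ^ 2 + (k * γ) ^ 2 - ξ₁ ^ 2) ^ 2 + (2 * ξ₁ * (k * γ)) ^ 2 -
          (k ^ 2 + (k * γ) ^ 2 - ξ₁ ^ 2 + 2 * (ξ₁ ^ 2 * γ ^ 2 / (1 + γ ^ 2))) ^ 2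
          = 4 * ξ₁ ^ 4 * γ ^ 2 / (1 + γ ^ 2) ^ 2 := by
        field_simp
        ring
      rw [expand]
      positivity
    rcases le_or_gt 0 (w.re + 2 * c ^ 2) with h | h
    · exact (Real.le_sqrt h (by positivity)).mpr h0
    · exact h.le.trans (Real.sqrt_nonneg _)
  have hμim : μ.im = Real.sqrt ((‖w‖ - w.re) / 2) := by
    rw [hμ, one_div]
    exact cpow_inv_two_im_eq_sqrt him0
  constructor
  · rw [hμim, ge_iff_le]
    have hra : w.re ≤ ‖w‖ := Complex.re_le_norm w
    refine (Real.le_sqrt hc0 (by linarith)).mpr (by linarith)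
  · rw [ge_iff_le, hc]
    have hγ1' : γ ≤ 1 := by
      have h1 : (1:ℝ) ≤ Real.sqrt Real.pi := by
        rw [show (1:ℝ) = Real.sqrt 1 by simp]
        exact Real.sqrt_le_sqrt (by linarith [Real.pi_gt_three])
      calc γ ≤ 1 / Real.sqrt Real.pi := hγ1
        _ ≤ 1 / 1 := by gcongr
        _ = 1 := by norm_num
    have hs : Real.sqrt (1 + γ ^ 2) ≤ Real.sqrt 2 := Real.sqrt_le_sqrt (by nlinarith)
    exact div_le_div_of_nonneg_left (by positivity) hsd hs
end
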